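/- arXiv:1703.02415 — 2 statements merged into one kernel-verified Lean document; each statement's English description precedes it below -/
import Mathlib

section
/- Let 𝒯 = {(14253, 10101), (15243, 10101)} be a set of two templates. Then for every n, every permutation in S_{n,𝒯} avoids all four patterns 2341, 2413, 2431, and 3241. -/
/-- A *permutation word* of length `n`: a list that is a rearrangement of `1, 2, ..., n`
(where `n` is its length). -/
def IsPermWord (w : List ℕ) : Prop := w.Perm (List.range' 1 w.length)

/-- Two words are *order-isomorphic*: they have the same length and corresponding
entries compare in the same way. -/
def OrderIsoWord (u v : List ℕ) : Prop :=
  u.length = v.length ∧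
    ∀ (i j : ℕ) (hi : i < u.length) (hj : j < u.length)
      (hi' : i < v.length) (hj' : j < v.length),
      (u[i]'hi < u[j]'hj ↔ v[i]'hi' < v[j]'hj')

/-- `w` contains a copy of the pattern `σ`: some subsequence of `w` (given by increasing
indices) is order-isomorphic to `σ`. -/
def ContainsPattern (w σ : List ℕ) : Prop :=
  ∃ s : List ℕ, s.Sublist w ∧ OrderIsoWord s σ

/-- `w` avoids the pattern `σ`: it contains no copy of `σ`. -/
def AvoidsPattern (w σ : List ℕ) : Prop := ¬ ContainsPattern w σ

/-- Membership in the family of permutation-word sets `S_{n,𝒯}` generated by a finite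
set `𝒯` of templates (the length index `n` is just the length of the word).
`InS Ts w` holds iff `w` is the empty word, a single-letter word, or, for some template
`(P, B) ∈ Ts`, the concatenation of subwords `W_1, ..., W_t` (`t = |P|`, total length at
least `2`) such that: whenever `p_i > p_j` every element of `W_i` exceeds every element of
`W_j`; each `W_i` is order-isomorphic to a permutation word `V_i` that again satisfies
`InS`; and whenever `b_i = 0` the subword `W_i` has exactly one element. -/
inductive InS (Ts : List (List ℕ × List Bool)) : List ℕ → Prop where
  | nil : InS Ts []
  | single (x : ℕ) : InS Ts [x]
  | join (P : List ℕ) (B : List Bool) (hT : (P, B) ∈ Ts)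
      (Ws Vs : List (List ℕ)) (hlen : Ws.length = P.length)
      (hVs : Vs.length = Ws.length)
      (h2 : 2 ≤ Ws.flatten.length)
      (horder : ∀ (i j : ℕ) (hi : i < Ws.length) (hj : j < Ws.length),
          P[j]'(by omega) < P[i]'(by omega) →
          ∀ x ∈ Ws[i]'hi, ∀ y ∈ Ws[j]'hj, y < x)
      (hiso : ∀ (i : ℕ) (hi : i < Ws.length),
          IsPermWord (Vs[i]'(by omega)) ∧ OrderIsoWord (Ws[i]'hi) (Vs[i]'(by omega)))
      (hrec : ∀ (i : ℕ) (hi : i < Vs.length), InS Ts (Vs[i]'hi))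
      (hzero : ∀ (i : ℕ) (hi : i < Ws.length) (hb : i < B.length),
          B[i]'hb = false → (Ws[i]'hi).length = 1) :
      InS Ts Ws.flatten

/-- The set `S_{n,𝒯}` of permutation words of length `n` generated by the finite set
`Ts` of templates. -/
def Sset (Ts : List (List ℕ × List Bool)) (n : ℕ) : Set (List ℕ) :=
  {w | w.length = n ∧ IsPermWord w ∧ InS Ts w}

lemma avoid_of_short {w τ : List ℕ} (h : w.length < τ.length) : AvoidsPattern w τ := by
  rintro ⟨s, hs, hl, -⟩
  have := hs.length_le
  omega

lemma contains_of_iso {u v τ : List ℕ} (h : OrderIsoWord u v) (hc : ContainsPattern u τ) :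
    ContainsPattern v τ := by
  obtain ⟨s, hs, hlen_iso, hcmp⟩ := hc
  obtain ⟨is, hseq, hpw⟩ := List.sublist_eq_map_getElem hs
  subst hseq
  have hlen : u.length = v.length := h.1
  have hpw' : (is.map (Fin.cast hlen)).Pairwise (· < ·) := by
    rw [List.pairwise_map]
    exact hpw.imp (fun hab => hab)
  refine ⟨(is.map (Fin.cast hlen)).map (fun x => v[x]), List.map_getElem_sublist hpw', ?_, ?_⟩
  · simpa using hlen_iso
  · intro i j hi hj hi' hj'
    simp only [List.length_map] at hi hj
    simp only [List.getElem_map]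
    have hb : ∀ k, k < is.length → k < (List.map (fun x => u[x]) is).length := by
      simp
    have := hcmp i j (hb i hi) (hb j hj) (by simpa using hi') (by simpa using hj')
    simp only [List.getElem_map] at this
    rw [← this]
    exact (h.2 (is[i]'hi).val (is[j]'hj).val (is[i]'hi).isLt (is[j]'hj).isLt
      (hlen ▸ (is[i]'hi).isLt) (hlen ▸ (is[j]'hj).isLt)).symm

set_option synthInstance.maxSize 2000 in
lemma zlem2341 : ∀ z0 z1 z2 z3 : Fin 5,
  ¬(z0.val ≤ z1.val ∧
    z1.val ≤ z2.val ∧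
    z2.val ≤ z3.val ∧
    (z0.val = z1.val → z0.val % 2 = 0) ∧
    (z1.val = z2.val → z1.val % 2 = 0) ∧
    (z2.val = z3.val → z2.val % 2 = 0) ∧
    ¬(z0.val = z3.val ∧ z0.val % 2 = 0) ∧
    ¬(z0.val % 2 = 0 ∧ z3.val % 2 = 1) ∧
    ¬(z1.val % 2 = 0 ∧ z0.val % 2 = 1) ∧
    ¬(z1.val % 2 = 0 ∧ z3.val % 2 = 1) ∧
    ¬(z2.val % 2 = 0 ∧ z0.val % 2 = 1) ∧
    ¬(z2.val % 2 = 0 ∧ z1.val % 2 = 1) ∧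
    ¬(z2.val % 2 = 0 ∧ z3.val % 2 = 1) ∧
    ¬(z0.val % 2 = 0 ∧ z3.val % 2 = 0 ∧ z0.val < z3.val) ∧
    ¬(z1.val % 2 = 0 ∧ z3.val % 2 = 0 ∧ z1.val < z3.val) ∧
    ¬(z2.val % 2 = 0 ∧ z3.val % 2 = 0 ∧ z2.val < z3.val)) := by decide

set_option synthInstance.maxSize 2000 in
lemma zlem2413 : ∀ z0 z1 z2 z3 : Fin 5,
  ¬(z0.val ≤ z1.val ∧
    z1.val ≤ z2.val ∧
    z2.val ≤ z3.val ∧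
    (z0.val = z1.val → z0.val % 2 = 0) ∧
    (z1.val = z2.val → z1.val % 2 = 0) ∧
    (z2.val = z3.val → z2.val % 2 = 0) ∧
    ¬(z0.val = z3.val ∧ z0.val % 2 = 0) ∧
    ¬(z0.val % 2 = 0 ∧ z2.val % 2 = 1) ∧
    ¬(z1.val % 2 = 0 ∧ z0.val % 2 = 1) ∧
    ¬(z1.val % 2 = 0 ∧ z2.val % 2 = 1) ∧
    ¬(z1.val % 2 = 0 ∧ z3.val % 2 = 1) ∧
    ¬(z3.val % 2 = 0 ∧ z0.val % 2 = 1) ∧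
    ¬(z3.val % 2 = 0 ∧ z2.val % 2 = 1) ∧
    ¬(z0.val % 2 = 0 ∧ z2.val % 2 = 0 ∧ z0.val < z2.val) ∧
    ¬(z1.val % 2 = 0 ∧ z2.val % 2 = 0 ∧ z1.val < z2.val) ∧
    ¬(z1.val % 2 = 0 ∧ z3.val % 2 = 0 ∧ z1.val < z3.val)) := by decide

set_option synthInstance.maxSize 2000 in
lemma zlem2431 : ∀ z0 z1 z2 z3 : Fin 5,
  ¬(z0.val ≤ z1.val ∧
    z1.val ≤ z2.val ∧
    z2.val ≤ z3.val ∧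
    (z0.val = z1.val → z0.val % 2 = 0) ∧
    (z1.val = z2.val → z1.val % 2 = 0) ∧
    (z2.val = z3.val → z2.val % 2 = 0) ∧
    ¬(z0.val = z3.val ∧ z0.val % 2 = 0) ∧
    ¬(z0.val % 2 = 0 ∧ z3.val % 2 = 1) ∧
    ¬(z1.val % 2 = 0 ∧ z0.val % 2 = 1) ∧
    ¬(z1.val % 2 = 0 ∧ z2.val % 2 = 1) ∧
    ¬(z1.val % 2 = 0 ∧ z3.val % 2 = 1) ∧
    ¬(z2.val % 2 = 0 ∧ z0.val % 2 = 1) ∧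
    ¬(z2.val % 2 = 0 ∧ z3.val % 2 = 1) ∧
    ¬(z0.val % 2 = 0 ∧ z3.val % 2 = 0 ∧ z0.val < z3.val) ∧
    ¬(z1.val % 2 = 0 ∧ z2.val % 2 = 0 ∧ z1.val < z2.val) ∧
    ¬(z1.val % 2 = 0 ∧ z3.val % 2 = 0 ∧ z1.val < z3.val) ∧
    ¬(z2.val % 2 = 0 ∧ z3.val % 2 = 0 ∧ z2.val < z3.val)) := by decide

set_option synthInstance.maxSize 2000 in
lemma zlem3241 : ∀ z0 z1 z2 z3 : Fin 5,
  ¬(z0.val ≤ z1.val ∧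
    z1.val ≤ z2.val ∧
    z2.val ≤ z3.val ∧
    (z0.val = z1.val → z0.val % 2 = 0) ∧
    (z1.val = z2.val → z1.val % 2 = 0) ∧
    (z2.val = z3.val → z2.val % 2 = 0) ∧
    ¬(z0.val = z3.val ∧ z0.val % 2 = 0) ∧
    ¬(z0.val % 2 = 0 ∧ z1.val % 2 = 1) ∧
    ¬(z0.val % 2 = 0 ∧ z3.val % 2 = 1) ∧
    ¬(z1.val % 2 = 0 ∧ z3.val % 2 = 1) ∧
    ¬(z2.val % 2 = 0 ∧ z0.val % 2 = 1) ∧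
    ¬(z2.val % 2 = 0 ∧ z1.val % 2 = 1) ∧
    ¬(z2.val % 2 = 0 ∧ z3.val % 2 = 1) ∧
    ¬(z0.val % 2 = 0 ∧ z1.val % 2 = 0 ∧ z0.val < z1.val) ∧
    ¬(z0.val % 2 = 0 ∧ z3.val % 2 = 0 ∧ z0.val < z3.val) ∧
    ¬(z1.val % 2 = 0 ∧ z3.val % 2 = 0 ∧ z1.val < z3.val) ∧
    ¬(z2.val % 2 = 0 ∧ z3.val % 2 = 0 ∧ z2.val < z3.val)) := by decide


lemma core_lemma (a0 a1 a2 a3 z0 z1 z2 z3 : ℕ)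
    (m01 : z0 ≤ z1) (m12 : z1 ≤ z2) (m23 : z2 ≤ z3) (hb : z3 ≤ 4)
    (e01 : z0 = z1 → z0 % 2 = 0) (e12 : z1 = z2 → z1 % 2 = 0) (e23 : z2 = z3 → z2 % 2 = 0)
    (hne : ¬ (z0 = z3 ∧ z0 % 2 = 0))
    (lh01 : z0 % 2 = 0 → z1 % 2 = 1 → a0 < a1)
    (lh02 : z0 % 2 = 0 → z2 % 2 = 1 → a0 < a2)
    (lh03 : z0 % 2 = 0 → z3 % 2 = 1 → a0 < a3)
    (lh10 : z1 % 2 = 0 → z0 % 2 = 1 → a1 < a0)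
    (lh12 : z1 % 2 = 0 → z2 % 2 = 1 → a1 < a2)
    (lh13 : z1 % 2 = 0 → z3 % 2 = 1 → a1 < a3)
    (lh20 : z2 % 2 = 0 → z0 % 2 = 1 → a2 < a0)
    (lh21 : z2 % 2 = 0 → z1 % 2 = 1 → a2 < a1)
    (lh23 : z2 % 2 = 0 → z3 % 2 = 1 → a2 < a3)
    (lh30 : z3 % 2 = 0 → z0 % 2 = 1 → a3 < a0)
    (lh31 : z3 % 2 = 0 → z1 % 2 = 1 → a3 < a1)
    (lh32 : z3 % 2 = 0 → z2 % 2 = 1 → a3 < a2)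
    (ll01 : z0 % 2 = 0 → z1 % 2 = 0 → z0 < z1 → a0 < a1)
    (ll02 : z0 % 2 = 0 → z2 % 2 = 0 → z0 < z2 → a0 < a2)
    (ll03 : z0 % 2 = 0 → z3 % 2 = 0 → z0 < z3 → a0 < a3)
    (ll12 : z1 % 2 = 0 → z2 % 2 = 0 → z1 < z2 → a1 < a2)
    (ll13 : z1 % 2 = 0 → z3 % 2 = 0 → z1 < z3 → a1 < a3)
    (ll23 : z2 % 2 = 0 → z3 % 2 = 0 → z2 < z3 → a2 < a3)
    (hord : (a3 < a0 ∧ a0 < a1 ∧ a1 < a2) ∨ (a2 < a0 ∧ a0 < a3 ∧ a3 < a1) ∨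
      (a3 < a0 ∧ a0 < a2 ∧ a2 < a1) ∨ (a3 < a1 ∧ a1 < a0 ∧ a0 < a2)) : False := by
  have h0 : z0 < 5 := by omega
  have h1 : z1 < 5 := by omega
  have h2 : z2 < 5 := by omega
  have h3 : z3 < 5 := by omega
  rcases hord with ⟨o1,o2,o3⟩|⟨o1,o2,o3⟩|⟨o1,o2,o3⟩|⟨o1,o2,o3⟩
  · exact zlem2341 ⟨z0,h0⟩ ⟨z1,h1⟩ ⟨z2,h2⟩ ⟨z3,h3⟩ ⟨m01, m12, m23, e01, e12, e23, hne, (fun h => absurd (lh03 h.1 h.2) (by omega)), (fun h => absurd (lh10 h.1 h.2) (by omega)), (fun h => absurd (lh13 h.1 h.2) (by omega)), (fun h => absurd (lh20 h.1 h.2) (by omega)), (fun h => absurd (lh21 h.1 h.2) (by omega)), (fun h => absurd (lh23 h.1 h.2) (by omega)), (fun h => absurd (ll03 h.1 h.2.1 h.2.2) (by omega)), (fun h => absurd (ll13 h.1 h.2.1 h.2.2) (by omega)), (fun h => absurd (ll23 h.1 h.2.1 h.2.2) (by omega))⟩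
  · exact zlem2413 ⟨z0,h0⟩ ⟨z1,h1⟩ ⟨z2,h2⟩ ⟨z3,h3⟩ ⟨m01, m12, m23, e01, e12, e23, hne, (fun h => absurd (lh02 h.1 h.2) (by omega)), (fun h => absurd (lh10 h.1 h.2) (by omega)), (fun h => absurd (lh12 h.1 h.2) (by omega)), (fun h => absurd (lh13 h.1 h.2) (by omega)), (fun h => absurd (lh30 h.1 h.2) (by omega)), (fun h => absurd (lh32 h.1 h.2) (by omega)), (fun h => absurd (ll02 h.1 h.2.1 h.2.2) (by omega)), (fun h => absurd (ll12 h.1 h.2.1 h.2.2) (by omega)), (fun h => absurd (ll13 h.1 h.2.1 h.2.2) (by omega))⟩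
  · exact zlem2431 ⟨z0,h0⟩ ⟨z1,h1⟩ ⟨z2,h2⟩ ⟨z3,h3⟩ ⟨m01, m12, m23, e01, e12, e23, hne, (fun h => absurd (lh03 h.1 h.2) (by omega)), (fun h => absurd (lh10 h.1 h.2) (by omega)), (fun h => absurd (lh12 h.1 h.2) (by omega)), (fun h => absurd (lh13 h.1 h.2) (by omega)), (fun h => absurd (lh20 h.1 h.2) (by omega)), (fun h => absurd (lh23 h.1 h.2) (by omega)), (fun h => absurd (ll03 h.1 h.2.1 h.2.2) (by omega)), (fun h => absurd (ll12 h.1 h.2.1 h.2.2) (by omega)), (fun h => absurd (ll13 h.1 h.2.1 h.2.2) (by omega)), (fun h => absurd (ll23 h.1 h.2.1 h.2.2) (by omega))⟩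
  · exact zlem3241 ⟨z0,h0⟩ ⟨z1,h1⟩ ⟨z2,h2⟩ ⟨z3,h3⟩ ⟨m01, m12, m23, e01, e12, e23, hne, (fun h => absurd (lh01 h.1 h.2) (by omega)), (fun h => absurd (lh03 h.1 h.2) (by omega)), (fun h => absurd (lh13 h.1 h.2) (by omega)), (fun h => absurd (lh20 h.1 h.2) (by omega)), (fun h => absurd (lh21 h.1 h.2) (by omega)), (fun h => absurd (lh23 h.1 h.2) (by omega)), (fun h => absurd (ll01 h.1 h.2.1 h.2.2) (by omega)), (fun h => absurd (ll03 h.1 h.2.1 h.2.2) (by omega)), (fun h => absurd (ll13 h.1 h.2.1 h.2.2) (by omega)), (fun h => absurd (ll23 h.1 h.2.1 h.2.2) (by omega))⟩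

def zfn (n1 n2 n3 n4 i : ℕ) : ℕ :=
  if i < n1 then 0 else if i < n1+n2 then 1 else if i < n1+n2+n3 then 2
  else if i < n1+n2+n3+n4 then 3 else 4

set_option maxHeartbeats 1600000 in
lemma master (A C E : List ℕ) (x y : ℕ) (τ : List ℕ)
    (hτ : τ = [2,3,4,1] ∨ τ = [2,4,1,3] ∨ τ = [2,4,3,1] ∨ τ = [3,2,4,1])
    (hAC : ∀ a ∈ A, ∀ c ∈ C, a < c) (hAE : ∀ a ∈ A, ∀ e ∈ E, a < e)
    (hCE : ∀ c ∈ C, ∀ e ∈ E, c < e)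
    (hhigh : ∀ a, (a ∈ A ∨ a ∈ C ∨ a ∈ E) → a < x ∧ a < y)
    (hA : AvoidsPattern A τ) (hC : AvoidsPattern C τ) (hE : AvoidsPattern E τ) :
    AvoidsPattern (A ++ x :: (C ++ y :: E)) τ := by
  rintro ⟨s, hs, hiso⟩
  have hτ4 : τ.length = 4 := by rcases hτ with rfl|rfl|rfl|rfl <;> rfl
  have hs4 : s.length = 4 := hiso.1.trans hτ4
  rw [show A ++ x :: (C ++ y :: E) = A ++ ([x] ++ (C ++ ([y] ++ E))) by simp] at hs
  rw [List.sublist_append_iff] at hs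
  obtain ⟨u1, t1, rfl, hu1, hs⟩ := hs
  rw [List.sublist_append_iff] at hs
  obtain ⟨u2, t2, rfl, hu2, hs⟩ := hs
  rw [List.sublist_append_iff] at hs
  obtain ⟨u3, t3, rfl, hu3, hs⟩ := hs
  rw [List.sublist_append_iff] at hs
  obtain ⟨u4, u5, rfl, hu4, hu5⟩ := hs
  have hn2 : u2.length ≤ 1 := by simpa using hu2.length_le
  have hn4 : u4.length ≤ 1 := by simpa using hu4.length_le
  have hlen5 : u1.length + (u2.length + (u3.length + (u4.length + u5.length))) = 4 := by
    simpa using hs4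
  by_cases hc1 : u1.length = 4
  · obtain rfl : u2 = [] := List.length_eq_zero_iff.mp (by omega)
    obtain rfl : u3 = [] := List.length_eq_zero_iff.mp (by omega)
    obtain rfl : u4 = [] := List.length_eq_zero_iff.mp (by omega)
    obtain rfl : u5 = [] := List.length_eq_zero_iff.mp (by omega)
    exact hA ⟨u1, hu1, by simpa using hiso⟩
  by_cases hc3 : u3.length = 4
  · obtain rfl : u1 = [] := List.length_eq_zero_iff.mp (by omega)
    obtain rfl : u2 = [] := List.length_eq_zero_iff.mp (by omega)
    obtain rfl : u4 = [] := List.length_eq_zero_iff.mp (by omega)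
    obtain rfl : u5 = [] := List.length_eq_zero_iff.mp (by omega)
    exact hC ⟨u3, hu3, by simpa using hiso⟩
  by_cases hc5 : u5.length = 4
  · obtain rfl : u1 = [] := List.length_eq_zero_iff.mp (by omega)
    obtain rfl : u2 = [] := List.length_eq_zero_iff.mp (by omega)
    obtain rfl : u3 = [] := List.length_eq_zero_iff.mp (by omega)
    obtain rfl : u4 = [] := List.length_eq_zero_iff.mp (by omega)
    exact hE ⟨u5, hu5, by simpa using hiso⟩
  set s := u1 ++ (u2 ++ (u3 ++ (u4 ++ u5))) with hsdef
  have hget : ∀ i, i < 4 →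
      (zfn u1.length u2.length u3.length u4.length i = 0 ∧ s.getD i 0 ∈ A) ∨
      (zfn u1.length u2.length u3.length u4.length i = 1 ∧ s.getD i 0 = x) ∨
      (zfn u1.length u2.length u3.length u4.length i = 2 ∧ s.getD i 0 ∈ C) ∨
      (zfn u1.length u2.length u3.length u4.length i = 3 ∧ s.getD i 0 = y) ∨
      (zfn u1.length u2.length u3.length u4.length i = 4 ∧ s.getD i 0 ∈ E) := by
    intro i hi
    unfold zfn
    split_ifs with h1 h2 h3 h4
    · refine Or.inl ⟨rfl, ?_⟩
      rw [hsdef, List.getD_append _ _ _ _ h1, List.getD_eq_getElem _ _ h1]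
      exact hu1.subset (List.getElem_mem h1)
    · obtain rfl | rfl := List.sublist_singleton.mp hu2
      · exfalso
        simp only [List.length_nil] at h2
        omega
      · have e1 : ([x] : List ℕ).length = 1 := rfl
        refine Or.inr (Or.inl ⟨rfl, ?_⟩)
        rw [hsdef, List.getD_append_right _ _ _ _ (by omega),
          List.getD_append _ _ _ _ (by omega),
          show i - u1.length = 0 from by omega]
        rfl
    · refine Or.inr (Or.inr (Or.inl ⟨rfl, ?_⟩))
      rw [hsdef, List.getD_append_right _ _ _ _ (by omega),
        List.getD_append_right _ _ _ _ (by omega),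
        List.getD_append _ _ _ _ (by omega),
        List.getD_eq_getElem _ _ (by omega)]
      exact hu3.subset (List.getElem_mem _)
    · obtain rfl | rfl := List.sublist_singleton.mp hu4
      · exfalso
        simp only [List.length_nil] at h4
        omega
      · have e1 : ([y] : List ℕ).length = 1 := rfl
        refine Or.inr (Or.inr (Or.inr (Or.inl ⟨rfl, ?_⟩)))
        rw [hsdef, List.getD_append_right _ _ _ _ (by omega),
          List.getD_append_right _ _ _ _ (by omega),
          List.getD_append_right _ _ _ _ (by omega),
          List.getD_append _ _ _ _ (by omega),
          show i - u1.length - u2.length - u3.length = 0 from by omega]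
        rfl
    · refine Or.inr (Or.inr (Or.inr (Or.inr ⟨rfl, ?_⟩)))
      rw [hsdef, List.getD_append_right _ _ _ _ (by omega),
        List.getD_append_right _ _ _ _ (by omega),
        List.getD_append_right _ _ _ _ (by omega),
        List.getD_append_right _ _ _ _ (by omega),
        List.getD_eq_getElem _ _ (by omega)]
      exact hu5.subset (List.getElem_mem _)
  have lowhigh : ∀ i j, i < 4 → j < 4 → zfn u1.length u2.length u3.length u4.length i % 2 = 0 →
      zfn u1.length u2.length u3.length u4.length j % 2 = 1 → s.getD i 0 < s.getD j 0 := by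
    intro i j hi hj h1 h2
    rcases hget i hi with ⟨hz,hm⟩|⟨hz,hm⟩|⟨hz,hm⟩|⟨hz,hm⟩|⟨hz,hm⟩ <;>
      rcases hget j hj with ⟨hz',hm'⟩|⟨hz',hm'⟩|⟨hz',hm'⟩|⟨hz',hm'⟩|⟨hz',hm'⟩ <;>
      first
        | omega
        | (rw [hm']; exact (hhigh _ (by tauto)).1)
        | (rw [hm']; exact (hhigh _ (by tauto)).2)
  have lowlow : ∀ i j, i < 4 → j < 4 → zfn u1.length u2.length u3.length u4.length i % 2 = 0 →
      zfn u1.length u2.length u3.length u4.length j % 2 = 0 →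
      zfn u1.length u2.length u3.length u4.length i < zfn u1.length u2.length u3.length u4.length j →
      s.getD i 0 < s.getD j 0 := by
    intro i j hi hj h1 h2 h3
    rcases hget i hi with ⟨hz,hm⟩|⟨hz,hm⟩|⟨hz,hm⟩|⟨hz,hm⟩|⟨hz,hm⟩ <;>
      rcases hget j hj with ⟨hz',hm'⟩|⟨hz',hm'⟩|⟨hz',hm'⟩|⟨hz',hm'⟩|⟨hz',hm'⟩ <;>
      first
        | omega
        | exact hAC _ hm _ hm'
        | exact hAE _ hm _ hm'
        | exact hCE _ hm _ hm'
  have hlt4 : ∀ k, k < 4 → k < s.length := by intro k hk; omega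
  have hτlt : ∀ k, k < 4 → k < τ.length := by intro k hk; omega
  have hcmp : ∀ i j, i < 4 → j < 4 →
      (s.getD i 0 < s.getD j 0 ↔ τ.getD i 0 < τ.getD j 0) := by
    intro i j hi hj
    rw [List.getD_eq_getElem _ _ (hlt4 i hi), List.getD_eq_getElem _ _ (hlt4 j hj),
      List.getD_eq_getElem _ _ (hτlt i hi), List.getD_eq_getElem _ _ (hτlt j hj)]
    exact hiso.2 i j _ _ _ _
  have hord : (s.getD 3 0 < s.getD 0 0 ∧ s.getD 0 0 < s.getD 1 0 ∧ s.getD 1 0 < s.getD 2 0) ∨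
      (s.getD 2 0 < s.getD 0 0 ∧ s.getD 0 0 < s.getD 3 0 ∧ s.getD 3 0 < s.getD 1 0) ∨
      (s.getD 3 0 < s.getD 0 0 ∧ s.getD 0 0 < s.getD 2 0 ∧ s.getD 2 0 < s.getD 1 0) ∨
      (s.getD 3 0 < s.getD 1 0 ∧ s.getD 1 0 < s.getD 0 0 ∧ s.getD 0 0 < s.getD 2 0) := by
    rcases hτ with rfl|rfl|rfl|rfl
    · exact Or.inl ⟨(hcmp 3 0 (by omega) (by omega)).mpr (by decide),
        (hcmp 0 1 (by omega) (by omega)).mpr (by decide),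
        (hcmp 1 2 (by omega) (by omega)).mpr (by decide)⟩
    · exact Or.inr (Or.inl ⟨(hcmp 2 0 (by omega) (by omega)).mpr (by decide),
        (hcmp 0 3 (by omega) (by omega)).mpr (by decide),
        (hcmp 3 1 (by omega) (by omega)).mpr (by decide)⟩)
    · exact Or.inr (Or.inr (Or.inl ⟨(hcmp 3 0 (by omega) (by omega)).mpr (by decide),
        (hcmp 0 2 (by omega) (by omega)).mpr (by decide),
        (hcmp 2 1 (by omega) (by omega)).mpr (by decide)⟩))
    · exact Or.inr (Or.inr (Or.inr ⟨(hcmp 3 1 (by omega) (by omega)).mpr (by decide),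
        (hcmp 1 0 (by omega) (by omega)).mpr (by decide),
        (hcmp 0 2 (by omega) (by omega)).mpr (by decide)⟩))
  exact core_lemma (s.getD 0 0) (s.getD 1 0) (s.getD 2 0) (s.getD 3 0)
    (zfn u1.length u2.length u3.length u4.length 0) (zfn u1.length u2.length u3.length u4.length 1)
    (zfn u1.length u2.length u3.length u4.length 2) (zfn u1.length u2.length u3.length u4.length 3)
    (by unfold zfn; split_ifs <;> omega) (by unfold zfn; split_ifs <;> omega)
    (by unfold zfn; split_ifs <;> omega) (by unfold zfn; split_ifs <;> omega)
    (by unfold zfn; split_ifs <;> omega) (by unfold zfn; split_ifs <;> omega)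
    (by unfold zfn; split_ifs <;> omega)
    (by rintro ⟨hh1, hh2⟩; unfold zfn at hh1 hh2; split_ifs at hh1 hh2 <;> omega)
    (fun h1 h2 => lowhigh 0 1 (by omega) (by omega) h1 h2)
    (fun h1 h2 => lowhigh 0 2 (by omega) (by omega) h1 h2)
    (fun h1 h2 => lowhigh 0 3 (by omega) (by omega) h1 h2)
    (fun h1 h2 => lowhigh 1 0 (by omega) (by omega) h1 h2)
    (fun h1 h2 => lowhigh 1 2 (by omega) (by omega) h1 h2)
    (fun h1 h2 => lowhigh 1 3 (by omega) (by omega) h1 h2)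
    (fun h1 h2 => lowhigh 2 0 (by omega) (by omega) h1 h2)
    (fun h1 h2 => lowhigh 2 1 (by omega) (by omega) h1 h2)
    (fun h1 h2 => lowhigh 2 3 (by omega) (by omega) h1 h2)
    (fun h1 h2 => lowhigh 3 0 (by omega) (by omega) h1 h2)
    (fun h1 h2 => lowhigh 3 1 (by omega) (by omega) h1 h2)
    (fun h1 h2 => lowhigh 3 2 (by omega) (by omega) h1 h2)
    (fun h1 h2 h3 => lowlow 0 1 (by omega) (by omega) h1 h2 h3)
    (fun h1 h2 h3 => lowlow 0 2 (by omega) (by omega) h1 h2 h3)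
    (fun h1 h2 h3 => lowlow 0 3 (by omega) (by omega) h1 h2 h3)
    (fun h1 h2 h3 => lowlow 1 2 (by omega) (by omega) h1 h2 h3)
    (fun h1 h2 h3 => lowlow 1 3 (by omega) (by omega) h1 h2 h3)
    (fun h1 h2 h3 => lowlow 2 3 (by omega) (by omega) h1 h2 h3)
    hord

lemma list_len5 {α : Type*} {l : List α} (h : l.length = 5) :
    ∃ a b c d e, l = [a, b, c, d, e] := by
  rcases l with _|⟨a,_|⟨b,_|⟨c,_|⟨d,_|⟨e,_|⟨f,t⟩⟩⟩⟩⟩⟩ <;>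
    first
      | exact ⟨_, _, _, _, _, rfl⟩
      | (exfalso; simp only [List.length_cons, List.length_nil] at h; omega)

/-- Let `𝒯 = {(14253, 10101), (15243, 10101)}`.  Then for every `n`,
every permutation in `S_{n,𝒯}` avoids all four patterns `2341`, `2413`, `2431`, `3241`. -/
theorem templates_14253_15243_avoid (n : ℕ) (w : List ℕ)
    (hw : w ∈ Sset [([1, 4, 2, 5, 3], [true, false, true, false, true]),
      ([1, 5, 2, 4, 3], [true, false, true, false, true])] n) :
    AvoidsPattern w [2, 3, 4, 1] ∧ AvoidsPattern w [2, 4, 1, 3] ∧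
      AvoidsPattern w [2, 4, 3, 1] ∧ AvoidsPattern w [3, 2, 4, 1] := by
  obtain ⟨-, -, hins⟩ := hw
  induction hins with
  | nil =>
    exact ⟨avoid_of_short (by simp), avoid_of_short (by simp),
      avoid_of_short (by simp), avoid_of_short (by simp)⟩
  | single x =>
    exact ⟨avoid_of_short (by simp), avoid_of_short (by simp),
      avoid_of_short (by simp), avoid_of_short (by simp)⟩
  | join P B hT Ws Vs hlen hVs h2 horder hiso hrec hzero ih =>
    simp only [List.mem_cons, List.not_mem_nil, or_false, Prod.mk.injEq] at hT
    have hP : P = [1, 4, 2, 5, 3] ∨ P = [1, 5, 2, 4, 3] := hT.imp And.left And.left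
    have hB : B = [true, false, true, false, true] := by
      rcases hT with ⟨-, h⟩ | ⟨-, h⟩ <;> exact h
    subst hB
    have hW5 : Ws.length = 5 := by rw [hlen]; rcases hP with rfl | rfl <;> rfl
    obtain ⟨W0, W1, W2, W3, W4, rfl⟩ := list_len5 hW5
    have hV5 : Vs.length = 5 := by rw [hVs]; rfl
    -- W1 and W3 are singletons
    have hW1 : W1.length = 1 := by
      have := hzero 1 (by simp) (by simp) (by decide)
      simpa using this
    have hW3 : W3.length = 1 := by
      have := hzero 3 (by simp) (by simp) (by decide)
      simpa using this
    obtain ⟨x, rfl⟩ := List.length_eq_one_iff.mp hW1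
    obtain ⟨y, rfl⟩ := List.length_eq_one_iff.mp hW3
    -- order facts
    have hW02 : ∀ a ∈ W0, ∀ c ∈ W2, a < c := by
      intro a ha c hc
      have := horder 2 0 (by simp) (by simp) (by rcases hP with rfl | rfl <;> simp)
      simp only [List.getElem_cons_succ, List.getElem_cons_zero] at this
      exact this c hc a ha
    have hW04 : ∀ a ∈ W0, ∀ e ∈ W4, a < e := by
      intro a ha e he
      have := horder 4 0 (by simp) (by simp) (by rcases hP with rfl | rfl <;> simp)
      simp only [List.getElem_cons_succ, List.getElem_cons_zero] at this
      exact this e he a ha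
    have hW24 : ∀ c ∈ W2, ∀ e ∈ W4, c < e := by
      intro c hc e he
      have := horder 4 2 (by simp) (by simp) (by rcases hP with rfl | rfl <;> simp)
      simp only [List.getElem_cons_succ, List.getElem_cons_zero] at this
      exact this e he c hc
    have hhigh : ∀ a, (a ∈ W0 ∨ a ∈ W2 ∨ a ∈ W4) → a < x ∧ a < y := by
      intro a ha
      constructor
      · rcases ha with ha | ha | ha
        · have := horder 1 0 (by simp) (by simp) (by rcases hP with rfl | rfl <;> simp)
          simp only [List.getElem_cons_succ, List.getElem_cons_zero] at this
          exact this x (by simp) a ha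
        · have := horder 1 2 (by simp) (by simp) (by rcases hP with rfl | rfl <;> simp)
          simp only [List.getElem_cons_succ, List.getElem_cons_zero] at this
          exact this x (by simp) a ha
        · have := horder 1 4 (by simp) (by simp) (by rcases hP with rfl | rfl <;> simp)
          simp only [List.getElem_cons_succ, List.getElem_cons_zero] at this
          exact this x (by simp) a ha
      · rcases ha with ha | ha | ha
        · have := horder 3 0 (by simp) (by simp) (by rcases hP with rfl | rfl <;> simp)
          simp only [List.getElem_cons_succ, List.getElem_cons_zero] at this
          exact this y (by simp) a ha
        · have := horder 3 2 (by simp) (by simp) (by rcases hP with rfl | rfl <;> simp)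
          simp only [List.getElem_cons_succ, List.getElem_cons_zero] at this
          exact this y (by simp) a ha
        · have := horder 3 4 (by simp) (by simp) (by rcases hP with rfl | rfl <;> simp)
          simp only [List.getElem_cons_succ, List.getElem_cons_zero] at this
          exact this y (by simp) a ha
    -- block avoidance
    have hblock : ∀ (i : ℕ) (hi : i < 5) (L : List ℕ),
        (([W0, [x], W2, [y], W4] : List (List ℕ))[i]'(by simpa using hi) = L) →
        (AvoidsPattern L [2,3,4,1] ∧ AvoidsPattern L [2,4,1,3] ∧
         AvoidsPattern L [2,4,3,1] ∧ AvoidsPattern L [3,2,4,1]) := by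
      intro i hi L hL
      have hiso' := (hiso i (by simpa using hi)).2
      rw [hL] at hiso'
      have hihi := ih i (by omega)
      exact ⟨fun hc => hihi.1 (contains_of_iso hiso' hc),
        fun hc => hihi.2.1 (contains_of_iso hiso' hc),
        fun hc => hihi.2.2.1 (contains_of_iso hiso' hc),
        fun hc => hihi.2.2.2 (contains_of_iso hiso' hc)⟩
    have hA4 := hblock 0 (by omega) W0 rfl
    have hC4 := hblock 2 (by omega) W2 rfl
    have hE4 := hblock 4 (by omega) W4 rfl
    show AvoidsPattern ([W0, [x], W2, [y], W4] : List (List ℕ)).flatten _ ∧ _ ∧ _ ∧ _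
    simp only [List.flatten_cons, List.flatten_nil, List.append_nil, List.singleton_append]
    exact ⟨master _ _ _ _ _ _ (Or.inl rfl) hW02 hW04 hW24 hhigh hA4.1 hC4.1 hE4.1,
      master _ _ _ _ _ _ (Or.inr (Or.inl rfl)) hW02 hW04 hW24 hhigh hA4.2.1 hC4.2.1 hE4.2.1,
      master _ _ _ _ _ _ (Or.inr (Or.inr (Or.inl rfl))) hW02 hW04 hW24 hhigh hA4.2.2.1 hC4.2.2.1 hE4.2.2.1,
      master _ _ _ _ _ _ (Or.inr (Or.inr (Or.inr rfl))) hW02 hW04 hW24 hhigh hA4.2.2.2 hC4.2.2.2 hE4.2.2.2⟩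
end

section
/- Let 𝒯 = {(14253, 10101), (15243, 10101)} be a set of two templates, and define the sequence (s_n) by s_0 = s_1 = 1 and, for n > 1, s_n = Σ_{i=1}^{n-1} Σ_{j=i+1}^{n} 2·s_{i-1}·s_{j-i-1}·s_{n-j}. Then |S_{n,𝒯}| = s_n for all n ≥ 0. -/
namespace Aux

theorem pw_mem {w : List ℕ} (h : IsPermWord w) {x : ℕ} (hx : x ∈ w) :
    1 ≤ x ∧ x ≤ w.length := by
  have := h.mem_iff.mp hx
  rw [List.mem_range'_1] at this
  omega

theorem pw_nodup {w : List ℕ} (h : IsPermWord w) : w.Nodup :=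
  h.nodup_iff.mpr (List.nodup_range')

theorem countP_range' (L m : ℕ) (hm : m ≤ L) :
    (List.range' 1 L).countP (· ≤ m) = m := by
  have h : List.range' 1 m ++ List.range' (1 + m) (L - m) = List.range' 1 L := by
    have := List.range'_append (s := 1) (m := m) (n := L - m) (step := 1)
    rw [Nat.one_mul, Nat.add_sub_cancel' hm] at this; exact this
  rw [← h, List.countP_append]
  have h1 : (List.range' 1 m).countP (· ≤ m) = m := by
    have hall : ∀ a ∈ List.range' 1 m, ((· ≤ m) a : Bool) := by
      intro a ha
      rw [List.mem_range'_1] at ha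
      simpa using by omega
    rw [List.countP_eq_length.mpr hall]
    simp
  have h2 : (List.range' (1 + m) (L - m)).countP (· ≤ m) = 0 := by
    rw [List.countP_eq_zero]
    intro a ha
    rw [List.mem_range'_1] at ha
    simpa using by omega
  omega

theorem pw_countP {w : List ℕ} (h : IsPermWord w) {m : ℕ} (hm : m ≤ w.length) :
    w.countP (· ≤ m) = m := by
  rw [h.countP_eq]
  exact countP_range' _ _ hm

/-- Two order-isomorphic permutation words are equal. -/
theorem pw_iso_eq {u v : List ℕ} (hu : IsPermWord u) (hv : IsPermWord v)
    (h : OrderIsoWord u v) : u = v := by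
  obtain ⟨hlen, hiso⟩ := h
  apply List.ext_getElem hlen
  intro i hi hi'
  have key : ∀ j (hj : j < u.length) (hj' : j < v.length),
      (u[j] ≤ u[i] ↔ v[j] ≤ v[i]) := by
    intro j hj hj'
    have h1 := hiso i j hi hj hi' hj'
    have h2 := hiso j i hj hi hj' hi'
    omega
  have cu : u.countP (· ≤ u[i]) = u[i] := pw_countP hu (pw_mem hu (u.getElem_mem hi)).2
  have cv : v.countP (· ≤ v[i]) = v[i] := pw_countP hv (pw_mem hv (v.getElem_mem hi')).2
  have eq1 : ∀ a b : ℕ, (∀ j (hj : j < u.length) (hj' : j < v.length),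
      (u[j] ≤ a ↔ v[j] ≤ b)) → u.countP (· ≤ a) = v.countP (· ≤ b) := by
    intro a b hab
    have hu1 : u = (u.zip v).map Prod.fst := (List.map_fst_zip (l₁ := u) (l₂ := v) (le_of_eq hlen)).symm
    have hv1 : v = (u.zip v).map Prod.snd := (List.map_snd_zip (l₁ := u) (l₂ := v) (le_of_eq hlen.symm)).symm
    conv_lhs => rw [hu1]
    conv_rhs => rw [hv1]
    rw [List.countP_map, List.countP_map]
    apply List.countP_congr
    intro x hx
    obtain ⟨j, hj, hjx⟩ := List.mem_iff_getElem.mp hx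
    have hju : j < u.length := by
      have := List.length_zip (l₁ := u) (l₂ := v) ▸ hj
      omega
    have hjv : j < v.length := by
      have := List.length_zip (l₁ := u) (l₂ := v) ▸ hj
      omega
    rw [List.getElem_zip] at hjx
    subst hjx
    simpa using hab j hju hjv
  have eq1' := eq1 u[i] v[i] (fun j hj hj' => key j hj hj')
  omega


theorem iso_refl (u : List ℕ) : OrderIsoWord u u := ⟨rfl, fun _ _ _ _ _ _ => Iff.rfl⟩

theorem iso_symm {u v : List ℕ} (h : OrderIsoWord u v) : OrderIsoWord v u :=
  ⟨h.1.symm, fun i j hi hj hi' hj' => (h.2 i j hi' hj' hi hj).symm⟩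

theorem iso_trans {u v x : List ℕ} (h : OrderIsoWord u v) (h' : OrderIsoWord v x) :
    OrderIsoWord u x := by
  refine ⟨h.1.trans h'.1, fun i j hi hj hi' hj' => ?_⟩
  have hiv : i < v.length := h.1 ▸ hi
  have hjv : j < v.length := h.1 ▸ hj
  exact (h.2 i j hi hj hiv hjv).trans (h'.2 i j hiv hjv hi' hj')

theorem iso_shift (k : ℕ) (u : List ℕ) : OrderIsoWord (u.map (· + k)) u := by
  refine ⟨by simp, fun i j hi hj hi' hj' => ?_⟩
  simp only [List.getElem_map]
  omega

theorem pw_single : IsPermWord [1] := by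
  unfold IsPermWord
  simp

theorem pw_nil : IsPermWord [] := by
  unfold IsPermWord
  simp

/-- A downward-closed sublist of a permutation word is a permutation of `1..d`. -/
theorem bottom_perm {w D : List ℕ} (hw : IsPermWord w) (hsub : D.Sublist w)
    (hcomp : ∀ x ∈ w, x ∉ D → ∀ y ∈ D, y < x) :
    D.Perm (List.range' 1 D.length) := by
  have hnd : D.Nodup := (pw_nodup hw).sublist hsub
  have hDsub : ∀ y ∈ D, y ≤ D.length := by
    intro y hy
    have hyw : y ∈ w := hsub.subset hy
    have hcount : w.countP (· ≤ y) = y := pw_countP hw (pw_mem hw hyw).2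
    have hsub2 : (w.filter (· ≤ y)).Subperm D := by
      apply List.subperm_of_subset
      · exact (pw_nodup hw).filter _
      · intro x hx
        have hxw := List.mem_of_mem_filter hx
        have hxy : x ≤ y := by simpa using List.of_mem_filter hx
        by_contra hxD
        exact absurd hxy (not_le.mpr (hcomp x hxw hxD y hy))
    have hle := hsub2.length_le
    rw [List.countP_eq_length_filter] at hcount
    omega
  have h1 : D.Subperm (List.range' 1 D.length) := by
    apply List.subperm_of_subset hnd
    intro x hx
    rw [List.mem_range'_1]
    have h2 := pw_mem hw (hsub.subset hx)
    have h3 := hDsub x hx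
    omega
  exact h1.perm_of_length_le (by simp)

/-- A list permuting `k+1..k+d` is the shift of a permutation word. -/
theorem unshift_pw {D : List ℕ} {k d : ℕ} (h : D.Perm (List.range' (k + 1) d)) :
    IsPermWord (D.map (· - k)) ∧ D = (D.map (· - k)).map (· + k) := by
  have hmem : ∀ x ∈ D, k + 1 ≤ x ∧ x < k + 1 + d := by
    intro x hx
    exact List.mem_range'_1.mp (h.mem_iff.mp hx)
  have hlen : D.length = d := by simpa using h.length_eq
  have hr : List.range' (k + 1) d = (List.range' 1 d).map (fun x => k + x) := by
    rw [List.map_add_range']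
  constructor
  · unfold IsPermWord
    have h2 : (D.map (· - k)).Perm ((List.range' (k + 1) d).map (· - k)) := h.map _
    rw [hr, List.map_map] at h2
    have heq : (List.range' 1 d).map ((· - k) ∘ fun x => k + x) = List.range' 1 d := by
      conv_rhs => rw [← List.map_id (List.range' 1 d)]
      apply List.map_congr_left
      intro x _
      simp only [Function.comp, id]
      omega
    rw [heq] at h2
    simpa [hlen] using h2
  · rw [List.map_map]
    conv_lhs => rw [← List.map_id D]
    apply List.map_congr_left
    intro x hx
    have := hmem x hx
    simp only [Function.comp, id]
    omega


abbrev Tmpls : List (List ℕ × List Bool) :=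
  [([1, 4, 2, 5, 3], [true, false, true, false, true]),
   ([1, 5, 2, 4, 3], [true, false, true, false, true])]

/-- Glue three permutation words and the two top values into one word.
`f = true` means the larger top value comes first. -/
def glue (f : Bool) (A B C : List ℕ) : List ℕ :=
  A ++ (if f then A.length + B.length + C.length + 2 else A.length + B.length + C.length + 1) ::
    (B.map (· + A.length) ++
      (if f then A.length + B.length + C.length + 1 else A.length + B.length + C.length + 2) ::
        C.map (· + (A.length + B.length)))

theorem glue_length (f : Bool) (A B C : List ℕ) :
    (glue f A B C).length = A.length + B.length + C.length + 2 := by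
  simp [glue]
  omega

theorem shift_pw_perm {B : List ℕ} (hB : IsPermWord B) (k : ℕ) :
    (B.map (· + k)).Perm (List.range' (k + 1) B.length) := by
  have h := hB.map (· + k)
  have heq : (List.range' 1 B.length).map (· + k) = List.range' (k + 1) B.length := by
    rw [show ((· + k) : ℕ → ℕ) = fun x => k + x from by funext x; omega, List.map_add_range']
  rwa [heq] at h

theorem glue_pw {f : Bool} {A B C : List ℕ} (hA : IsPermWord A) (hB : IsPermWord B)
    (hC : IsPermWord C) : IsPermWord (glue f A B C) := by
  set a := A.length with ha
  set b := B.length with hb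
  set c := C.length with hc
  set n := a + b + c + 2 with hn
  -- target range decomposition
  have hrange : List.range' 1 n =
      List.range' 1 a ++ List.range' (a + 1) b ++ List.range' (a + b + 1) c
        ++ [a + b + c + 1, a + b + c + 2] := by
    have e1 := List.range'_append (s := 1) (m := a) (n := b) (step := 1)
    have e2 := List.range'_append (s := 1) (m := a + b) (n := c) (step := 1)
    have e3 := List.range'_append (s := 1) (m := a + b + c) (n := 2) (step := 1)
    simp only [Nat.one_mul] at e1 e2 e3
    rw [show List.range' (1 + (a+b+c)) 2 = [a+b+c+1, a+b+c+2] from by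
      simp [List.range']; omega] at e3
    rw [show (1:ℕ) + a = a + 1 from by omega] at e1
    rw [show (1:ℕ) + (a+b) = a + b + 1 from by omega] at e2
    rw [show n = a + b + c + 2 from by omega, ← e3]
    congr 1
    rw [← e2]
    congr 1
    rw [← e1]
  unfold IsPermWord
  have hgl : (glue f A B C).length = n := by rw [glue_length]
  rw [hgl, hrange]
  have p1 : A.Perm (List.range' 1 a) := hA
  have p2 : (B.map (· + a)).Perm (List.range' (a + 1) b) := shift_pw_perm hB a
  have p3 : (C.map (· + (a + b))).Perm (List.range' (a + b + 1) c) := by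
    have := shift_pw_perm hC (a + b)
    simpa using this
  have hperm : ∀ (x y : ℕ), (A ++ x :: ((B.map (· + a)) ++ y :: (C.map (· + (a + b))))).Perm
      (x :: y :: (List.range' 1 a ++ List.range' (a + 1) b ++ List.range' (a + b + 1) c)) := by
    intro x y
    refine List.Perm.trans List.perm_middle ?_
    refine List.Perm.cons x ?_
    rw [← List.append_assoc]
    refine List.Perm.trans List.perm_middle ?_
    exact List.Perm.cons y ((p1.append p2).append p3)
  have htarget : ∀ (x y : ℕ),
      (x :: y :: (List.range' 1 a ++ List.range' (a + 1) b ++ List.range' (a + b + 1) c)).Perm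
      (List.range' 1 a ++ List.range' (a + 1) b ++ List.range' (a + b + 1) c ++ [x, y]) := by
    intro x y
    have := List.perm_append_comm (l₁ := [x, y])
      (l₂ := List.range' 1 a ++ List.range' (a + 1) b ++ List.range' (a + b + 1) c)
    simpa using this
  cases f with
  | false =>
    simp only [glue, if_false, Bool.false_eq_true]
    exact (hperm _ _).trans (htarget _ _)
  | true =>
    simp only [glue, if_true]
    refine ((hperm _ _).trans ?_)
    refine List.Perm.trans (List.Perm.swap _ _ _) ?_
    exact htarget _ _

theorem iso_single (x y : ℕ) : OrderIsoWord [x] [y] := by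
  refine ⟨rfl, ?_⟩
  intro i j hi hj hi' hj'
  simp only [List.length_singleton] at hi hj
  interval_cases i
  interval_cases j
  simp

theorem glue_core {A B C : List ℕ} {x y : ℕ} {P : List ℕ}
    (hA : IsPermWord A) (hB : IsPermWord B) (hC : IsPermWord C)
    (iA : InS Tmpls A) (iB : InS Tmpls B) (iC : InS Tmpls C)
    (hkey : (P = [1,4,2,5,3] ∧ x < y) ∨ (P = [1,5,2,4,3] ∧ y < x))
    (hx : A.length + B.length + C.length < x) (hy : A.length + B.length + C.length < y) :
    InS Tmpls (A ++ x :: (B.map (· + A.length) ++ y :: C.map (· + (A.length + B.length)))) := by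
  have hT : (P, [true, false, true, false, true]) ∈ Tmpls := by
    rcases hkey with ⟨rfl, _⟩ | ⟨rfl, _⟩ <;> simp [Tmpls]
  have hP5 : P.length = 5 := by
    rcases hkey with ⟨rfl, _⟩ | ⟨rfl, _⟩ <;> rfl
  have mA : ∀ u ∈ A, 1 ≤ u ∧ u ≤ A.length := fun u hu => pw_mem hA hu
  have mB : ∀ u ∈ B.map (· + A.length), A.length + 1 ≤ u ∧ u ≤ A.length + B.length := by
    intro u hu
    simp only [List.mem_map] at hu
    obtain ⟨w, hw, rfl⟩ := hu
    have := pw_mem hB hw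
    omega
  have mC : ∀ u ∈ C.map (· + (A.length + B.length)),
      A.length + B.length + 1 ≤ u ∧ u ≤ A.length + B.length + C.length := by
    intro u hu
    simp only [List.mem_map] at hu
    obtain ⟨w, hw, rfl⟩ := hu
    have := pw_mem hC hw
    omega
  have hflat : ([A, [x], B.map (· + A.length), [y], C.map (· + (A.length + B.length))] :
      List (List ℕ)).flatten
      = A ++ x :: (B.map (· + A.length) ++ y :: C.map (· + (A.length + B.length))) := by
    simp
  rw [← hflat]
  refine InS.join P [true, false, true, false, true] hT _ [A, [1], B, [1], C]
    (by simp [hP5]) rfl ?_ ?_ ?_ ?_ ?_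
  · rw [hflat]
    simp
    omega
  · intro i j hi hj hlt u hu v hv
    simp only [List.length_cons, List.length_nil] at hi hj
    rcases hkey with ⟨rfl, hxy⟩ | ⟨rfl, hxy⟩ <;>
      interval_cases i <;> interval_cases j <;>
      simp only [List.getElem_cons_zero, List.getElem_cons_succ, List.mem_singleton]
        at hlt hu hv <;>
      (try have b1 := mA _ hu) <;> (try have b2 := mA _ hv) <;>
      (try have b3 := mB _ hu) <;> (try have b4 := mB _ hv) <;>
      (try have b5 := mC _ hu) <;> (try have b6 := mC _ hv) <;> omega
  · intro i hi
    simp only [List.length_cons, List.length_nil] at hi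
    interval_cases i <;> simp only [List.getElem_cons_zero, List.getElem_cons_succ]
    · exact ⟨hA, iso_refl A⟩
    · exact ⟨pw_single, iso_single x 1⟩
    · exact ⟨hB, iso_shift A.length B⟩
    · exact ⟨pw_single, iso_single y 1⟩
    · exact ⟨hC, iso_shift (A.length + B.length) C⟩
  · intro i hi
    simp only [List.length_cons, List.length_nil] at hi
    interval_cases i <;> simp only [List.getElem_cons_zero, List.getElem_cons_succ]
    · exact iA
    · exact InS.single 1
    · exact iB
    · exact InS.single 1
    · exact iC
  · intro i hi hb hfb
    simp only [List.length_cons, List.length_nil] at hi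
    interval_cases i <;> simp_all

theorem glue_InS {f : Bool} {A B C : List ℕ} (hA : IsPermWord A) (hB : IsPermWord B)
    (hC : IsPermWord C) (iA : InS Tmpls A) (iB : InS Tmpls B) (iC : InS Tmpls C) :
    InS Tmpls (glue f A B C) := by
  cases f
  · simp only [glue, if_false, Bool.false_eq_true]
    exact glue_core hA hB hC iA iB iC (Or.inl ⟨rfl, by omega⟩) (by omega) (by omega)
  · simp only [glue, if_true]
    exact glue_core hA hB hC iA iB iC (Or.inr ⟨rfl, by omega⟩) (by omega) (by omega)

theorem list_len5 {α : Type*} {l : List α} (h : l.length = 5) :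
    ∃ a b c d e, l = [a, b, c, d, e] := by
  rcases l with _ | ⟨a, _ | ⟨b, _ | ⟨c, _ | ⟨d, _ | ⟨e, l'⟩⟩⟩⟩⟩ <;> simp at h
  exact ⟨a, b, c, d, e, by simp [h]⟩

theorem pair_perm {x y u v : ℕ} (h : ([x, y] : List ℕ).Perm [u, v]) :
    (x = u ∧ y = v) ∨ (x = v ∧ y = u) := by
  have hx : x ∈ [u, v] := h.subset (by simp)
  have hy : y ∈ [u, v] := h.subset (by simp)
  have hcu := h.count_eq u
  have hcv := h.count_eq v
  simp only [List.mem_cons, List.mem_singleton, List.not_mem_nil, or_false] at hx hy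
  simp only [List.count_cons, List.count_nil, beq_iff_eq] at hcu hcv
  rcases hx with rfl | rfl <;> rcases hy with h2 | h2 <;> simp_all <;> omega

/-- Core structural analysis: the three ordinary blocks carry consecutive value bands
and the two singled-out letters are the two largest values. -/
theorem struct_core {W0 W2 W4 : List ℕ} {x y : ℕ}
    (hw : IsPermWord (W0 ++ x :: (W2 ++ y :: W4)))
    (h0x : ∀ v ∈ W0, v < x) (h0y : ∀ v ∈ W0, v < y)
    (h02 : ∀ u ∈ W2, ∀ v ∈ W0, v < u) (h04 : ∀ u ∈ W4, ∀ v ∈ W0, v < u)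
    (h2x : ∀ v ∈ W2, v < x) (h2y : ∀ v ∈ W2, v < y) (h24 : ∀ u ∈ W4, ∀ v ∈ W2, v < u)
    (h4x : ∀ v ∈ W4, v < x) (h4y : ∀ v ∈ W4, v < y) :
    W0.Perm (List.range' 1 W0.length) ∧
    W2.Perm (List.range' (W0.length + 1) W2.length) ∧
    W4.Perm (List.range' (W0.length + W2.length + 1) W4.length) ∧
    ((x = W0.length + W2.length + W4.length + 1 ∧ y = W0.length + W2.length + W4.length + 2) ∨
     (x = W0.length + W2.length + W4.length + 2 ∧ y = W0.length + W2.length + W4.length + 1)) := by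
  set w := W0 ++ x :: (W2 ++ y :: W4) with hwdef
  set a := W0.length with ha
  set b := W2.length with hb
  set c := W4.length with hc
  have hmemw : ∀ z, z ∈ w ↔ (z ∈ W0 ∨ z = x ∨ z ∈ W2 ∨ z = y ∨ z ∈ W4) := by
    intro z
    simp [hwdef, List.mem_append, List.mem_cons, or_assoc]
  -- bottom block
  have hsub0 : W0.Sublist w := List.sublist_append_left _ _
  have p0 : W0.Perm (List.range' 1 a) := by
    apply bottom_perm hw hsub0
    intro z hz hzn v hv
    rcases (hmemw z).mp hz with h | rfl | h | rfl | h
    · exact absurd h hzn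
    · exact h0x v hv
    · exact h02 z h v hv
    · exact h0y v hv
    · exact h04 z h v hv
  -- bottom two blocks
  have hsub02 : (W0 ++ W2).Sublist w := by
    apply List.Sublist.append_left _ W0
    exact ((List.sublist_append_left W2 (y :: W4)).trans (List.sublist_cons_self x _))
  have p02 : (W0 ++ W2).Perm (List.range' 1 (a + b)) := by
    have h' := bottom_perm hw hsub02 ?_
    · rw [show (W0 ++ W2).length = a + b from by simp; omega] at h'
      exact h' 
    intro z hz hzn v hv
    simp only [List.mem_append, not_or] at hzn
    simp only [List.mem_append] at hv
    rcases (hmemw z).mp hz with h | rfl | h | rfl | h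
    · exact absurd h hzn.1
    · rcases hv with h' | h'
      · exact h0x v h'
      · exact h2x v h'
    · exact absurd h hzn.2
    · rcases hv with h' | h'
      · exact h0y v h'
      · exact h2y v h'
    · rcases hv with h' | h'
      · exact h04 z h v h'
      · exact h24 z h v h'
  -- bottom three blocks
  have hsub024 : (W0 ++ W2 ++ W4).Sublist w := by
    rw [List.append_assoc]
    apply List.Sublist.append_left _ W0
    refine List.Sublist.trans ?_ (List.sublist_cons_self x _)
    apply List.Sublist.append_left _ W2
    exact List.sublist_cons_self y _
  have p024 : (W0 ++ W2 ++ W4).Perm (List.range' 1 (a + b + c)) := by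
    have h' := bottom_perm hw hsub024 ?_
    · rw [show (W0 ++ W2 ++ W4).length = a + b + c from by simp; omega] at h'
      exact h' 
    intro z hz hzn v hv
    simp only [List.mem_append, not_or] at hzn
    simp only [List.mem_append] at hv
    rcases (hmemw z).mp hz with h | rfl | h | rfl | h
    · exact absurd h hzn.1.1
    · rcases hv with (h' | h') | h'
      · exact h0x v h'
      · exact h2x v h'
      · exact h4x v h'
    · exact absurd h hzn.1.2
    · rcases hv with (h' | h') | h'
      · exact h0y v h'
      · exact h2y v h'
      · exact h4y v h'
    · exact absurd h hzn.2
  -- peel off W2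
  have e1 : List.range' 1 a ++ List.range' (a + 1) b = List.range' 1 (a + b) := by
    have := List.range'_append (s := 1) (m := a) (n := b) (step := 1)
    simp only [Nat.one_mul] at this
    rw [show (1:ℕ) + a = a + 1 from by omega] at this
    rw [this]
  have p2 : W2.Perm (List.range' (a + 1) b) := by
    have h1 : (List.range' 1 a ++ W2).Perm (List.range' 1 a ++ List.range' (a + 1) b) := by
      refine ((p0.symm.append (List.Perm.refl W2)).trans p02).trans ?_
      rw [e1]
    exact (List.perm_append_left_iff _).mp h1
  have e2 : List.range' 1 (a + b) ++ List.range' (a + b + 1) c = List.range' 1 (a + b + c) := by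
    have := List.range'_append (s := 1) (m := a + b) (n := c) (step := 1)
    simp only [Nat.one_mul] at this
    rw [show (1:ℕ) + (a + b) = a + b + 1 from by omega] at this
    rw [this]
  have p4 : W4.Perm (List.range' (a + b + 1) c) := by
    have h1 : (List.range' 1 (a + b) ++ W4).Perm
        (List.range' 1 (a + b) ++ List.range' (a + b + 1) c) := by
      refine ((p02.symm.append (List.Perm.refl W4)).trans ?_)
      refine List.Perm.trans ?_ (by rw [e2])
      exact p024
    exact (List.perm_append_left_iff _).mp h1
  -- identify x and y
  have hwlen : w.length = a + b + c + 2 := by simp [hwdef]; omega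
  have q1 : w.Perm (x :: y :: (W0 ++ W2 ++ W4)) := by
    refine List.Perm.trans List.perm_middle ?_
    refine List.Perm.cons x ?_
    rw [← List.append_assoc]
    exact List.perm_middle
  have e3 : List.range' 1 (a + b + c) ++ [a + b + c + 1, a + b + c + 2] =
      List.range' 1 (a + b + c + 2) := by
    have := List.range'_append (s := 1) (m := a + b + c) (n := 2) (step := 1)
    simp only [Nat.one_mul] at this
    rw [show List.range' (1 + (a + b + c)) 2 = [a + b + c + 1, a + b + c + 2] from by
      simp [List.range']; omega] at this
    rw [this]
  have q2 : (List.range' 1 (a + b + c) ++ [x, y]).Perm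
      (List.range' 1 (a + b + c) ++ [a + b + c + 1, a + b + c + 2]) := by
    have hh : (x :: y :: (W0 ++ W2 ++ W4)).Perm
        (List.range' 1 (a + b + c) ++ [x, y]) := by
      refine List.Perm.trans ?_ (List.perm_append_comm (l₁ := [x, y]))
      exact List.Perm.cons x (List.Perm.cons y p024)
    refine (hh.symm.trans ?_)
    refine (q1.symm.trans ?_)
    have hthis : w.Perm (List.range' 1 w.length) := hw
    rw [hwlen, ← e3] at hthis
    exact hthis
  have q3 : ([x, y] : List ℕ).Perm [a + b + c + 1, a + b + c + 2] :=
    (List.perm_append_left_iff _).mp q2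
  exact ⟨p0, p2, p4, pair_perm q3⟩

/-- Full forward analysis producing the glue decomposition. -/
theorem struct_final {W0 W2 W4 V0 V2 V4 : List ℕ} {x y : ℕ}
    (hw : IsPermWord (W0 ++ x :: (W2 ++ y :: W4)))
    (h0x : ∀ v ∈ W0, v < x) (h0y : ∀ v ∈ W0, v < y)
    (h02 : ∀ u ∈ W2, ∀ v ∈ W0, v < u) (h04 : ∀ u ∈ W4, ∀ v ∈ W0, v < u)
    (h2x : ∀ v ∈ W2, v < x) (h2y : ∀ v ∈ W2, v < y) (h24 : ∀ u ∈ W4, ∀ v ∈ W2, v < u)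
    (h4x : ∀ v ∈ W4, v < x) (h4y : ∀ v ∈ W4, v < y)
    (hV0 : IsPermWord V0) (hO0 : OrderIsoWord W0 V0) (i0 : InS Tmpls V0)
    (hV2 : IsPermWord V2) (hO2 : OrderIsoWord W2 V2) (i2 : InS Tmpls V2)
    (hV4 : IsPermWord V4) (hO4 : OrderIsoWord W4 V4) (i4 : InS Tmpls V4) :
    ∃ (f : Bool) (A B C : List ℕ),
      IsPermWord A ∧ IsPermWord B ∧ IsPermWord C ∧
      InS Tmpls A ∧ InS Tmpls B ∧ InS Tmpls C ∧
      W0 ++ x :: (W2 ++ y :: W4) = glue f A B C := by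
  obtain ⟨p0, p2, p4, hpair⟩ := struct_core hw h0x h0y h02 h04 h2x h2y h24 h4x h4y
  set Bd := W2.map (· - W0.length) with hBd
  set Cd := W4.map (· - (W0.length + W2.length)) with hCd
  obtain ⟨hBpw, hBeq⟩ := unshift_pw p2
  obtain ⟨hCpw, hCeq⟩ := unshift_pw p4
  -- `IsPermWord W0` is exactly `p0`
  have hApw : IsPermWord W0 := p0
  -- transfer of `InS` along order isomorphism
  have hA_in : InS Tmpls W0 := by
    rw [pw_iso_eq hApw hV0 hO0]; exact i0
  have tB : OrderIsoWord W2 Bd := by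
    rw [hBeq]; exact iso_shift W0.length Bd
  have hB_in : InS Tmpls Bd := by
    rw [hBd, pw_iso_eq hBpw hV2 (iso_trans (iso_symm tB) hO2)]; exact i2
  have tC : OrderIsoWord W4 Cd := by
    rw [hCeq]; exact iso_shift (W0.length + W2.length) Cd
  have hC_in : InS Tmpls Cd := by
    rw [hCd, pw_iso_eq hCpw hV4 (iso_trans (iso_symm tC) hO4)]; exact i4
  have hBl : Bd.length = W2.length := by simp [hBd]
  have hCl : Cd.length = W4.length := by simp [hCd]
  rcases hpair with ⟨hx, hy⟩ | ⟨hx, hy⟩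
  · refine ⟨false, W0, Bd, Cd, hApw, hBpw, hCpw, hA_in, hB_in, hC_in, ?_⟩
    simp only [glue, Bool.false_eq_true, if_false, hBl, hCl]
    rw [← hBeq, ← hCl, ← hBl]
    rw [show W0.length + Bd.length + Cd.length + 1 = x from by omega]
    rw [show W0.length + Bd.length + Cd.length + 2 = y from by omega]
    rw [show W0.length + Bd.length = W0.length + W2.length from by omega, ← hCeq]
  · refine ⟨true, W0, Bd, Cd, hApw, hBpw, hCpw, hA_in, hB_in, hC_in, ?_⟩
    simp only [glue, if_true, hBl, hCl]
    rw [← hBeq, ← hCl, ← hBl]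
    rw [show W0.length + Bd.length + Cd.length + 2 = x from by omega]
    rw [show W0.length + Bd.length + Cd.length + 1 = y from by omega]
    rw [show W0.length + Bd.length = W0.length + W2.length from by omega, ← hCeq]

theorem InS_structure {w : List ℕ} (hw : IsPermWord w) (hl2 : 2 ≤ w.length)
    (hin : InS Tmpls w) :
    ∃ (f : Bool) (A B C : List ℕ),
      IsPermWord A ∧ IsPermWord B ∧ IsPermWord C ∧
      InS Tmpls A ∧ InS Tmpls B ∧ InS Tmpls C ∧ w = glue f A B C := by
  cases hin with
  | nil => simp at hl2
  | single x => simp at hl2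
  | join P Bl hT Ws Vs hlen hVs hsum horder hiso hrec hzero =>
    have hTT : (P = [1,4,2,5,3] ∨ P = [1,5,2,4,3]) ∧ Bl = [true,false,true,false,true] := by
      simp only [Tmpls, List.mem_cons, List.not_mem_nil, or_false] at hT
      constructor
      · rcases hT with h | h
        · exact Or.inl (congrArg Prod.fst h)
        · exact Or.inr (congrArg Prod.fst h)
      · rcases hT with h | h <;> exact congrArg Prod.snd h
    obtain ⟨hP, hBl⟩ := hTT
    have hlen5 : Ws.length = 5 := by rcases hP with rfl | rfl <;> simpa using hlen
    obtain ⟨W0, W1, W2, W3, W4, rfl⟩ := list_len5 hlen5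
    have hVs5 : Vs.length = 5 := by simpa using hVs
    obtain ⟨V0, V1, V2, V3, V4, rfl⟩ := list_len5 hVs5
    subst hBl
    have hW1 : W1.length = 1 := hzero 1 (by simp) (by simp) (by simp)
    obtain ⟨x, rfl⟩ := List.length_eq_one_iff.mp hW1
    have hW3 : W3.length = 1 := hzero 3 (by simp) (by simp) (by simp)
    obtain ⟨y, rfl⟩ := List.length_eq_one_iff.mp hW3
    have hwshape : ([W0, [x], W2, [y], W4] : List (List ℕ)).flatten
        = W0 ++ x :: (W2 ++ y :: W4) := by simp
    rw [hwshape] at hw ⊢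
    have hb0 : (0:ℕ) < ([W0, [x], W2, [y], W4] : List (List ℕ)).length := by simp
    have hb1 : (1:ℕ) < ([W0, [x], W2, [y], W4] : List (List ℕ)).length := by simp
    have hb2 : (2:ℕ) < ([W0, [x], W2, [y], W4] : List (List ℕ)).length := by simp
    have hb3 : (3:ℕ) < ([W0, [x], W2, [y], W4] : List (List ℕ)).length := by simp
    have hb4 : (4:ℕ) < ([W0, [x], W2, [y], W4] : List (List ℕ)).length := by simp
    have h0x : ∀ v ∈ W0, v < x := by
      intro v hv
      rcases hP with rfl | rfl <;>
        exact horder 1 0 hb1 hb0 (by simp) x (by simp) v (by simpa using hv)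
    have h0y : ∀ v ∈ W0, v < y := by
      intro v hv
      rcases hP with rfl | rfl <;>
        exact horder 3 0 hb3 hb0 (by simp) y (by simp) v (by simpa using hv)
    have h02 : ∀ u ∈ W2, ∀ v ∈ W0, v < u := by
      intro u hu v hv
      rcases hP with rfl | rfl <;>
        exact horder 2 0 hb2 hb0 (by simp) u (by simpa using hu) v (by simpa using hv)
    have h04 : ∀ u ∈ W4, ∀ v ∈ W0, v < u := by
      intro u hu v hv
      rcases hP with rfl | rfl <;>
        exact horder 4 0 hb4 hb0 (by simp) u (by simpa using hu) v (by simpa using hv)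
    have h2x : ∀ v ∈ W2, v < x := by
      intro v hv
      rcases hP with rfl | rfl <;>
        exact horder 1 2 hb1 hb2 (by simp) x (by simp) v (by simpa using hv)
    have h2y : ∀ v ∈ W2, v < y := by
      intro v hv
      rcases hP with rfl | rfl <;>
        exact horder 3 2 hb3 hb2 (by simp) y (by simp) v (by simpa using hv)
    have h24 : ∀ u ∈ W4, ∀ v ∈ W2, v < u := by
      intro u hu v hv
      rcases hP with rfl | rfl <;>
        exact horder 4 2 hb4 hb2 (by simp) u (by simpa using hu) v (by simpa using hv)
    have h4x : ∀ v ∈ W4, v < x := by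
      intro v hv
      rcases hP with rfl | rfl <;>
        exact horder 1 4 hb1 hb4 (by simp) x (by simp) v (by simpa using hv)
    have h4y : ∀ v ∈ W4, v < y := by
      intro v hv
      rcases hP with rfl | rfl <;>
        exact horder 3 4 hb3 hb4 (by simp) y (by simp) v (by simpa using hv)
    exact struct_final hw h0x h0y h02 h04 h2x h2y h24 h4x h4y
      (hiso 0 (by simp)).1 (hiso 0 (by simp)).2 (hrec 0 (by simp))
      (hiso 2 (by simp)).1 (hiso 2 (by simp)).2 (hrec 2 (by simp))
      (hiso 4 (by simp)).1 (hiso 4 (by simp)).2 (hrec 4 (by simp))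

theorem glue_indexes {f : Bool} {A B C : List ℕ} (hA : IsPermWord A) (hB : IsPermWord B)
    (hC : IsPermWord C) :
    (glue f A B C).idxOf (A.length + B.length + C.length + 1)
      = (if f then A.length + B.length + 1 else A.length) ∧
    (glue f A B C).idxOf (A.length + B.length + C.length + 2)
      = (if f then A.length else A.length + B.length + 1) := by
  set a := A.length with ha
  set b := B.length with hb
  set c := C.length with hc
  have hnA : ∀ v, a + b + c < v → v ∉ A := by
    intro v hv h
    have := pw_mem hA h
    omega
  have hnB : ∀ v, a + b + c < v → v ∉ B.map (· + a) := by
    intro v hv h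
    simp only [List.mem_map] at h
    obtain ⟨u, hu, rfl⟩ := h
    have := pw_mem hB hu
    omega
  cases f <;> simp only [glue, if_true, if_false, Bool.false_eq_true] <;> constructor <;>
    rw [List.idxOf_append_of_notMem (hnA _ (by omega))]
  · rw [List.idxOf_cons_self]
    omega
  · rw [List.idxOf_cons_ne _ (by omega : a+b+c+1 ≠ a+b+c+2),
      List.idxOf_append_of_notMem (hnB _ (by omega)), List.idxOf_cons_self]
    simp [Nat.succ_eq_add_one]
    omega
  · rw [List.idxOf_cons_ne _ (by omega : a+b+c+2 ≠ a+b+c+1),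
      List.idxOf_append_of_notMem (hnB _ (by omega)), List.idxOf_cons_self]
    simp [Nat.succ_eq_add_one]
    omega
  · rw [List.idxOf_cons_self]
    omega

theorem glue_full_inj {A B C A' B' C' : List ℕ} {f f' : Bool}
    (hA : IsPermWord A) (hB : IsPermWord B) (hC : IsPermWord C)
    (hA' : IsPermWord A') (hB' : IsPermWord B') (hC' : IsPermWord C')
    (heq : glue f A B C = glue f' A' B' C') :
    f = f' ∧ A = A' ∧ B = B' ∧ C = C' := by
  -- total lengths agree
  have hlen : A.length + B.length + C.length = A'.length + B'.length + C'.length := by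
    have h1 := glue_length f A B C
    have h2 := glue_length f' A' B' C'
    rw [heq] at h1
    omega
  obtain ⟨i1, i2⟩ := glue_indexes (f := f) hA hB hC
  obtain ⟨i1', i2'⟩ := glue_indexes (f := f') hA' hB' hC'
  rw [heq] at i1 i2
  rw [hlen] at i1 i2
  rw [i1'] at i1
  rw [i2'] at i2
  -- deduce equal lengths and equal flags
  have hlens : f = f' ∧ A.length = A'.length ∧ B.length = B'.length ∧ C.length = C'.length := by
    cases f <;> cases f' <;> simp_all <;> omega
  obtain ⟨rfl, hal, hbl, hcl⟩ := hlens
  refine ⟨rfl, ?_⟩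
  -- now peel the concatenation
  unfold glue at heq
  obtain ⟨hAeq, heq2⟩ := List.append_inj heq hal
  simp only [hal, hbl, hcl] at heq2
  obtain ⟨-, heq3⟩ := List.cons_eq_cons.mp heq2
  obtain ⟨hBeq, heq4⟩ := List.append_inj heq3 (by simp [hbl])
  have hBeq' : B = B' :=
    List.map_injective_iff.mpr (add_left_injective A'.length) hBeq
  obtain ⟨-, heq5⟩ := List.cons_eq_cons.mp heq4
  have hCeq' : C = C' :=
    List.map_injective_iff.mpr (add_left_injective (A'.length + B'.length)) heq5
  exact ⟨hAeq, hBeq', hCeq'⟩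

theorem Sfin (n : ℕ) : (Sset Tmpls n).Finite := by
  apply Set.Finite.subset (List.toFinset (List.permutations (List.range' 1 n))).finite_toSet
  intro w hw
  obtain ⟨hlen, hpw, -⟩ := hw
  simp only [Finset.coe_sort_coe, List.coe_toFinset, Set.mem_setOf_eq, List.mem_permutations]
  exact hlen ▸ hpw

noncomputable def SF (n : ℕ) : Finset (List ℕ) := (Sfin n).toFinset

theorem mem_SF {n : ℕ} {w : List ℕ} :
    w ∈ SF n ↔ w.length = n ∧ IsPermWord w ∧ InS Tmpls w := by
  rw [SF, Set.Finite.mem_toFinset]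
  rfl

theorem card_SFT (n : ℕ) : Nat.card (Sset Tmpls n) = (SF n).card := by
  rw [Nat.card_coe_set_eq, Set.ncard_eq_toFinset_card _ (Sfin n)]
  rfl

theorem SF_zero : SF 0 = {([] : List ℕ)} := by
  ext w
  simp only [mem_SF, Finset.mem_singleton]
  constructor
  · rintro ⟨hlen, -, -⟩
    exact List.length_eq_zero_iff.mp hlen
  · rintro rfl
    exact ⟨rfl, pw_nil, InS.nil⟩

theorem SF_one : SF 1 = {([1] : List ℕ)} := by
  ext w
  simp only [mem_SF, Finset.mem_singleton]
  constructor
  · rintro ⟨hlen, hpw, -⟩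
    obtain ⟨x, rfl⟩ := List.length_eq_one_iff.mp hlen
    have : ([x] : List ℕ).Perm [1] := hpw
    rw [List.perm_singleton.mp this]
  · rintro rfl
    exact ⟨rfl, pw_single, InS.single 1⟩

noncomputable def piece (n i j : ℕ) : Finset (List ℕ) :=
  (((SF (i-1) ×ˢ SF (j-i-1)) ×ˢ SF (n-j)) ×ˢ ({false, true} : Finset Bool)).image
    (fun p => glue p.2 p.1.1.1 p.1.1.2 p.1.2)

theorem mem_piece {n i j : ℕ} {w : List ℕ} :
    w ∈ piece n i j ↔ ∃ (A B C : List ℕ) (f : Bool),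
      A ∈ SF (i-1) ∧ B ∈ SF (j-i-1) ∧ C ∈ SF (n-j) ∧ glue f A B C = w := by
  simp only [piece, Finset.mem_image, Finset.mem_product]
  constructor
  · rintro ⟨⟨⟨⟨A, B⟩, C⟩, f⟩, ⟨⟨⟨hA, hB⟩, hC⟩, -⟩, hg⟩
    exact ⟨A, B, C, f, hA, hB, hC, hg⟩
  · rintro ⟨A, B, C, f, hA, hB, hC, hg⟩
    exact ⟨⟨⟨⟨A, B⟩, C⟩, f⟩, ⟨⟨⟨hA, hB⟩, hC⟩, by cases f <;> simp⟩, hg⟩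

theorem SF_eq (n : ℕ) (hn : 2 ≤ n) :
    SF n = (Finset.Icc 1 (n-1)).biUnion (fun i =>
      (Finset.Icc (i+1) n).biUnion (fun j => piece n i j)) := by
  ext w
  simp only [Finset.mem_biUnion, Finset.mem_Icc, mem_piece]
  constructor
  · intro hw
    obtain ⟨hlen, hpw, hin⟩ := mem_SF.mp hw
    obtain ⟨f, A, B, C, pA, pB, pC, iA, iB, iC, rfl⟩ :=
      InS_structure hpw (by omega) hin
    have hgl := glue_length f A B C
    rw [hlen] at hgl
    refine ⟨A.length + 1, ⟨by omega, by omega⟩, A.length + B.length + 2, ⟨by omega, by omega⟩,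
      A, B, C, f, ?_, ?_, ?_, rfl⟩
    · exact mem_SF.mpr ⟨by omega, pA, iA⟩
    · exact mem_SF.mpr ⟨by omega, pB, iB⟩
    · exact mem_SF.mpr ⟨by omega, pC, iC⟩
  · rintro ⟨i, ⟨hi1, hi2⟩, j, ⟨hj1, hj2⟩, A, B, C, f, hA, hB, hC, rfl⟩
    obtain ⟨lA, pA, iA⟩ := mem_SF.mp hA
    obtain ⟨lB, pB, iB⟩ := mem_SF.mp hB
    obtain ⟨lC, pC, iC⟩ := mem_SF.mp hC
    refine mem_SF.mpr ⟨?_, glue_pw pA pB pC, glue_InS pA pB pC iA iB iC⟩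
    rw [glue_length]
    omega

theorem piece_params {n i j i' j' : ℕ} {w : List ℕ}
    (hi1 : 1 ≤ i) (hij : i < j) (hjn : j ≤ n)
    (hi1' : 1 ≤ i') (hij' : i' < j') (hjn' : j' ≤ n)
    (h : w ∈ piece n i j) (h' : w ∈ piece n i' j') : i = i' ∧ j = j' := by
  obtain ⟨A, B, C, f, hA, hB, hC, hg⟩ := mem_piece.mp h
  obtain ⟨A', B', C', f', hA', hB', hC', hg'⟩ := mem_piece.mp h'
  obtain ⟨lA, pA, -⟩ := mem_SF.mp hA
  obtain ⟨lB, pB, -⟩ := mem_SF.mp hB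
  obtain ⟨lC, pC, -⟩ := mem_SF.mp hC
  obtain ⟨lA', pA', -⟩ := mem_SF.mp hA'
  obtain ⟨lB', pB', -⟩ := mem_SF.mp hB'
  obtain ⟨lC', pC', -⟩ := mem_SF.mp hC'
  obtain ⟨-, rfl, rfl, rfl⟩ := glue_full_inj pA pB pC pA' pB' pC' (hg.trans hg'.symm)
  omega

theorem card_piece {n i j : ℕ} (hi1 : 1 ≤ i) (hij : i < j) (hjn : j ≤ n) :
    (piece n i j).card = 2 * (SF (i-1)).card * (SF (j-i-1)).card * (SF (n-j)).card := by
  rw [piece, Finset.card_image_of_injOn]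
  · simp only [Finset.card_product]
    have : ({false, true} : Finset Bool).card = 2 := rfl
    rw [this]
    ring
  · rintro ⟨⟨⟨A, B⟩, C⟩, f⟩ hp ⟨⟨⟨A', B'⟩, C'⟩, f'⟩ hp' hg
    simp only [Finset.coe_product, Set.mem_prod, Finset.mem_coe] at hp hp'
    obtain ⟨⟨⟨hA, hB⟩, hC⟩, -⟩ := hp
    obtain ⟨⟨⟨hA', hB'⟩, hC'⟩, -⟩ := hp'
    obtain ⟨-, pA, -⟩ := mem_SF.mp hA
    obtain ⟨-, pB, -⟩ := mem_SF.mp hB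
    obtain ⟨-, pC, -⟩ := mem_SF.mp hC
    obtain ⟨-, pA', -⟩ := mem_SF.mp hA'
    obtain ⟨-, pB', -⟩ := mem_SF.mp hB'
    obtain ⟨-, pC', -⟩ := mem_SF.mp hC'
    obtain ⟨rfl, rfl, rfl, rfl⟩ := glue_full_inj pA pB pC pA' pB' pC' hg
    rfl

theorem card_SF_rec (n : ℕ) (hn : 2 ≤ n) :
    (SF n).card = ∑ i ∈ Finset.Icc 1 (n-1), ∑ j ∈ Finset.Icc (i+1) n,
      2 * (SF (i-1)).card * (SF (j-i-1)).card * (SF (n-j)).card := by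
  rw [SF_eq n hn]
  rw [Finset.card_biUnion]
  · apply Finset.sum_congr rfl
    intro i hi
    rw [Finset.mem_Icc] at hi
    rw [Finset.card_biUnion]
    · apply Finset.sum_congr rfl
      intro j hj
      rw [Finset.mem_Icc] at hj
      exact card_piece (by omega) (by omega) (by omega)
    · intro j1 hj1 j2 hj2 hne
      rw [Finset.mem_coe, Finset.mem_Icc] at hj1 hj2
      rw [Function.onFun, Finset.disjoint_left]
      intro w hw1 hw2
      obtain ⟨-, h⟩ := piece_params (by omega) (by omega) (by omega)
        (by omega) (by omega) (by omega) hw1 hw2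
      exact hne h
  · intro i1 hi1 i2 hi2 hne
    rw [Finset.mem_coe, Finset.mem_Icc] at hi1 hi2
    rw [Function.onFun, Finset.disjoint_left]
    intro w hw1 hw2
    simp only [Finset.mem_biUnion, Finset.mem_Icc] at hw1 hw2
    obtain ⟨j1, hj1, hwp1⟩ := hw1
    obtain ⟨j2, hj2, hwp2⟩ := hw2
    obtain ⟨h, -⟩ := piece_params (by omega) (by omega) (by omega)
      (by omega) (by omega) (by omega) hwp1 hwp2
    exact hne h

end Aux

/-- Let `𝒯 = {(14253, 10101), (15243, 10101)}` and let `s 0 = s 1 = 1`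
and, for `n > 1`, `s n = ∑_{i=1}^{n-1} ∑_{j=i+1}^{n} 2 * s (i-1) * s (j-i-1) * s (n-j)`.
Then `|S_{n,𝒯}| = s n` for all `n ≥ 0`. -/
theorem templates_14253_15243_card (s : ℕ → ℕ)
    (h0 : s 0 = 1) (h1 : s 1 = 1)
    (hrec : ∀ n, 1 < n → s n = ∑ i ∈ Finset.Icc 1 (n - 1), ∑ j ∈ Finset.Icc (i + 1) n,
      2 * s (i - 1) * s (j - i - 1) * s (n - j))
    (n : ℕ) :
    Nat.card (Sset [([1, 4, 2, 5, 3], [true, false, true, false, true]),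
      ([1, 5, 2, 4, 3], [true, false, true, false, true])] n) = s n := by
  have main : ∀ n, (Aux.SF n).card = s n := by
    intro n
    induction n using Nat.strong_induction_on with
    | _ n ih =>
      match n with
      | 0 => simpa [Aux.SF_zero] using h0.symm
      | 1 => simpa [Aux.SF_one] using h1.symm
      | (m+2) =>
        rw [Aux.card_SF_rec (m+2) (by omega), hrec (m+2) (by omega)]
        apply Finset.sum_congr rfl
        intro i hi
        rw [Finset.mem_Icc] at hi
        apply Finset.sum_congr rfl
        intro j hj
        rw [Finset.mem_Icc] at hj
        rw [ih (i-1) (by omega), ih (j-i-1) (by omega), ih (m+2-j) (by omega)]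
  exact (Aux.card_SFT n).trans (main n)
end
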